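/- arXiv:1601.06504 — 2 statements merged into one kernel-verified Lean document; each statement's English description precedes it below -/
import Mathlib

section
/- Let M=(S,P,I,AP,L) be a finite generalized possibilistic Kripke structure. Then for all states s, t ∈ S, the repeated reachability possibility to the single state t satisfies Po(s ⊨ □◇{t}) = P⁺(s,t) ∧ P⁺(t,t), where Po(s ⊨ □◇{t}) is the supremum of inf_{i≥0} P(π_i,π_{i+1}) over all infinite sequences π with π₀ = s in which t occurs infinitely often. -/
open unitInterval

instance : Fact ((0:ℝ) ≤ 1) := ⟨zero_le_one⟩

open Classical in
/-- The identity fuzzy matrix `P⁰`. -/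
noncomputable def matId {S : Type*} : S → S → unitInterval :=
  fun s t => if s = t then 1 else 0

/-- Max–min composition of fuzzy matrices: `(A∘B)(s,t) = sup_u A(s,u) ∧ B(u,t)`. -/
noncomputable def matComp {S : Type*} (A B : S → S → unitInterval) : S → S → unitInterval :=
  fun s t => ⨆ u, A s u ⊓ B u t

/-- `k`-th max–min power of a fuzzy matrix (`A⁰` is the identity matrix). -/
noncomputable def matPow {S : Type*} (A : S → S → unitInterval) : ℕ → S → S → unitInterval
  | 0 => matId
  | n + 1 => matComp (matPow A n) A

/-- Transitive closure `A⁺ = sup_{k ≥ 1} Aᵏ`. -/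
noncomputable def transClos {S : Type*} (A : S → S → unitInterval) : S → S → unitInterval :=
  fun s t => ⨆ k, matPow A (k + 1) s t

/-- Reflexive–transitive closure `A* = A⁰ ∨ A⁺ = sup_{k ≥ 0} Aᵏ`. -/
noncomputable def reflTransClos {S : Type*} (A : S → S → unitInterval) : S → S → unitInterval :=
  fun s t => ⨆ k, matPow A k s t

open Classical in
/-- The diagonal fuzzy matrix `D_B` of a fuzzy state `B`. -/
noncomputable def diagMat {S : Type*} (B : S → unitInterval) : S → S → unitInterval :=
  fun s t => if s = t then B s else 0

/-- Max–min application of a fuzzy matrix to a fuzzy vector. -/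
noncomputable def matVec {S : Type*} (A : S → S → unitInterval) (v : S → unitInterval) :
    S → unitInterval :=
  fun s => ⨆ t, A s t ⊓ v t

/-- `r_P(s) = sup { inf_{i≥0} P(s_i, s_{i+1}) : s₀ = s }`. -/
noncomputable def rP {S : Type*} (P : S → S → unitInterval) : S → unitInterval :=
  fun s => ⨆ (π : ℕ → S) (_ : π 0 = s), ⨅ i, P (π i) (π (i + 1))

/-- The possibility `Po(s ⊨ Φ)` of a fuzzy path property `Φ` at a state `s`:
`sup_{π ∈ S^ω, π₀ = s} ( inf_{i≥0} P(π_i,π_{i+1}) ∧ Φ(π) )`. -/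
noncomputable def Po {S : Type*} (P : S → S → unitInterval) (Φ : (ℕ → S) → unitInterval)
    (s : S) : unitInterval :=
  ⨆ (π : ℕ → S) (_ : π 0 = s), (⨅ i, P (π i) (π (i + 1))) ⊓ Φ π

/-- The generalized possibility measure of a set of infinite state sequences:
`Po(E) = sup_{π ∈ E} ( I(π₀) ∧ inf_{i≥0} P(π_i,π_{i+1}) )`. -/
noncomputable def PoSet {S : Type*} (P : S → S → unitInterval) (Init : S → unitInterval)
    (E : Set (ℕ → S)) : unitInterval :=
  ⨆ π ∈ E, Init (π 0) ⊓ ⨅ i, P (π i) (π (i + 1))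

section Aux

variable {S : Type*}

lemma unit_le_one (x : unitInterval) : x ≤ (1 : unitInterval) := by
  exact Subtype.coe_le_coe.mp x.2.2

lemma unit_zero_le (x : unitInterval) : (0 : unitInterval) ≤ x := by
  exact Subtype.coe_le_coe.mp x.2.1

lemma iSup_eq_max [Fintype S] [Nonempty S] (g : S → unitInterval) :
    ∃ u, (⨆ v, g v) = g u := by
  obtain ⟨u, hu⟩ := Finite.exists_max g
  exact ⟨u, le_antisymm (iSup_le hu) (le_iSup g u)⟩

lemma matPow_one (P : S → S → unitInterval) (a b : S) : matPow P 1 a b = P a b := by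
  show matComp matId P a b = P a b
  unfold matComp
  refine le_antisymm (iSup_le fun u => ?_) ?_
  · rcases eq_or_ne a u with h | h
    · subst h
      simp only [matId, if_pos rfl]
      exact inf_le_right
    · simp only [matId, if_neg h]
      exact le_trans inf_le_left (unit_zero_le _)
  · refine le_trans ?_ (le_iSup _ a)
    simp only [matId, if_pos rfl]
    exact le_inf (unit_le_one _) le_rfl

/-- A path's infimum is bounded by the corresponding matrix power entry. -/
lemma path_le_pow (P : S → S → unitInterval) (π : ℕ → S) (n a : ℕ) :
    (⨅ i, P (π i) (π (i + 1))) ≤ matPow P n (π a) (π (a + n)) := by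
  induction n with
  | zero =>
    show _ ≤ matId (π a) (π a)
    simp only [matId, if_pos rfl]
    exact unit_le_one _
  | succ n ih =>
    show _ ≤ matComp (matPow P n) P (π a) (π (a + (n + 1)))
    unfold matComp
    refine le_trans ?_ (le_iSup _ (π (a + n)))
    refine le_inf ih ?_
    have : a + (n + 1) = (a + n) + 1 := by omega
    rw [this]
    exact iInf_le _ (a + n)

/-- Extract an optimal finite path from a matrix power entry. -/
lemma exists_path [Fintype S] [Nonempty S] (P : S → S → unitInterval) :
    ∀ (n : ℕ) (a b : S), ∃ f : ℕ → S, f 0 = a ∧ f (n + 1) = b ∧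
      ∀ i ≤ n, matPow P (n + 1) a b ≤ P (f i) (f (i + 1)) := by
  intro n
  induction n with
  | zero =>
    intro a b
    refine ⟨fun i => if i = 0 then a else b, by simp, by simp, ?_⟩
    intro i hi
    interval_cases i
    rw [matPow_one]
    simp
  | succ n ih =>
    intro a b
    have hcomp : matPow P (n + 2) a b = ⨆ u, matPow P (n + 1) a u ⊓ P u b := rfl
    obtain ⟨u, hu⟩ := iSup_eq_max (fun u => matPow P (n + 1) a u ⊓ P u b)
    obtain ⟨g, hg0, hgn, hgstep⟩ := ih a u
    refine ⟨fun i => if i ≤ n + 1 then g i else b, by simp [hg0], ?_, ?_⟩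
    · simp only [if_neg (by omega : ¬(n + 1 + 1 ≤ n + 1))]
    · intro i hi
      have hle : matPow P (n + 2) a b ≤ matPow P (n + 1) a u ⊓ P u b := by
        rw [hcomp, hu]
      rcases Nat.lt_or_ge i (n + 1) with h | h
      · simp only [if_pos (by omega : i ≤ n + 1), if_pos (by omega : i + 1 ≤ n + 1)]
        exact le_trans hle (le_trans inf_le_left (hgstep i (by omega)))
      · have hi' : i = n + 1 := by omega
        subst hi'
        simp only [if_pos le_rfl, if_neg (by omega : ¬(n + 1 + 1 ≤ n + 1)), hgn]
        exact le_trans hle inf_le_right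

end Aux

/-- For a finite GPKS and states `s, t`, the repeated reachability
possibility to the single state `t` satisfies `Po(s ⊨ □◇{t}) = P⁺(s,t) ∧ P⁺(t,t)`,
where the left-hand side is the supremum of `inf_{i≥0} P(π_i,π_{i+1})` over all
infinite sequences `π` with `π₀ = s` in which `t` occurs infinitely often. -/
theorem Po_repeated_reach_single_state {S : Type*} [Fintype S] [Nonempty S]
    {AP : Type*} [Fintype AP]
    (P : S → S → unitInterval) (Init : S → unitInterval) (L : S → AP → unitInterval)
    (s t : S) :
    (⨆ (π : ℕ → S) (_ : π 0 = s ∧ ∀ i : ℕ, ∃ j, i ≤ j ∧ π j = t),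
        ⨅ i, P (π i) (π (i + 1))) =
      transClos P s t ⊓ transClos P t t := by
  refine le_antisymm ?_ ?_
  · -- ≤ : every path starting at s visiting t infinitely often is bounded
    refine iSup_le fun π => iSup_le fun ⟨h0, hio⟩ => ?_
    refine le_inf ?_ ?_
    · -- v ≤ P⁺ s t
      obtain ⟨j, hj1, hjt⟩ := hio 1
      have := path_le_pow P π j 0
      rw [Nat.zero_add, h0, hjt] at this
      refine le_trans this ?_
      have hj : (j - 1) + 1 = j := by omega
      refine le_trans ?_ (le_iSup (fun k => matPow P (k + 1) s t) (j - 1))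
      rw [hj]
    · -- v ≤ P⁺ t t
      obtain ⟨j₁, hj1, hj1t⟩ := hio 1
      obtain ⟨j₂, hj2, hj2t⟩ := hio (j₁ + 1)
      have := path_le_pow P π (j₂ - j₁) j₁
      rw [hj1t, (by omega : j₁ + (j₂ - j₁) = j₂), hj2t] at this
      refine le_trans this ?_
      have hj : (j₂ - j₁ - 1) + 1 = j₂ - j₁ := by omega
      refine le_trans ?_ (le_iSup (fun k => matPow P (k + 1) t t) (j₂ - j₁ - 1))
      rw [hj]
  · -- ≥ : build an eventually periodic path from the two closures
    set V := (⨆ (π : ℕ → S) (_ : π 0 = s ∧ ∀ i : ℕ, ∃ j, i ≤ j ∧ π j = t),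
        ⨅ i, P (π i) (π (i + 1))) with hV
    have key : ∀ k m : ℕ, matPow P (k + 1) s t ⊓ matPow P (m + 1) t t ≤ V := by
      intro k m
      obtain ⟨f, hf0, hfK, hfstep⟩ := exists_path P k s t
      obtain ⟨g, hg0, hgM, hgstep⟩ := exists_path P m t t
      set K := k + 1
      set M := m + 1
      set π : ℕ → S := fun i => if i < K then f i else g ((i - K) % M) with hπ
      have hπ0 : π 0 = s := by
        simp only [hπ, if_pos (by omega : 0 < K), hf0]
      have hgKM : ∀ j : ℕ, π (K + j * M) = t := by
        intro j
        simp only [hπ, if_neg (by omega : ¬ K + j * M < K)]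
        rw [(by omega : K + j * M - K = j * M), Nat.mul_mod_left, hg0]
      have hio : ∀ i : ℕ, ∃ j, i ≤ j ∧ π j = t := by
        intro i
        exact ⟨K + i * M, by nlinarith [Nat.one_le_iff_ne_zero.mpr (by omega : M ≠ 0)], hgKM i⟩
      refine le_trans ?_ (le_iSup _ π)
      refine le_trans ?_ (le_iSup _ ⟨hπ0, hio⟩)
      refine le_iInf fun i => ?_
      rcases Nat.lt_or_ge (i + 1) K with h | h
      · -- inside f
        simp only [hπ, if_pos (by omega : i < K), if_pos h]
        exact le_trans inf_le_left (hfstep i (by omega))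
      · rcases Nat.lt_or_ge i K with h' | h'
        · -- i = K - 1 : last step of f, landing on g 0 = t
          have hiK : i + 1 = K := by omega
          simp only [hπ, if_pos h', if_neg (by omega : ¬ i + 1 < K)]
          have hval : g ((i + 1 - K) % M) = f (i + 1) := by
            rw [hiK, Nat.sub_self, Nat.zero_mod, hg0, hfK]
          rw [hval]
          exact le_trans inf_le_left (hfstep i (by omega))
        · -- inside the loop g
          simp only [hπ, if_neg (by omega : ¬ i < K), if_neg (by omega : ¬ i + 1 < K)]
          set r := (i - K) % M with hr
          have hrM : r < M := Nat.mod_lt _ (by omega)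
          have hnext : (i + 1 - K) % M = (r + 1) % M := by
            conv_rhs => rw [Nat.add_mod, Nat.mod_eq_of_lt hrM]
            rw [(by omega : i + 1 - K = (i - K) + 1), Nat.add_mod, ← hr]
          have hgoal : g ((i + 1 - K) % M) = g (r + 1) := by
            rw [hnext]
            rcases Nat.lt_or_ge (r + 1) M with hlt | hge
            · rw [Nat.mod_eq_of_lt hlt]
            · have : r + 1 = M := by omega
              rw [this, Nat.mod_self, hg0, ← hgM]
          rw [hgoal]
          exact le_trans inf_le_right (hgstep r (by omega))
    -- min of two sups ≤ V, by linearity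
    by_contra hc
    push_neg at hc
    have h1 : ¬ (transClos P s t ≤ V) := fun h => absurd (le_trans inf_le_left h) (not_le.mpr hc)
    have h2 : ¬ (transClos P t t ≤ V) := fun h => absurd (le_trans inf_le_right h) (not_le.mpr hc)
    have h1' : ∃ k, ¬ matPow P (k + 1) s t ≤ V := by
      by_contra h; push_neg at h; exact h1 (iSup_le h)
    have h2' : ∃ m, ¬ matPow P (m + 1) t t ≤ V := by
      by_contra h; push_neg at h; exact h2 (iSup_le h)
    obtain ⟨k, hk⟩ := h1'
    obtain ⟨m, hm⟩ := h2'
    have := key k m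
    rcases le_total (matPow P (k + 1) s t) (matPow P (m + 1) t t) with h | h
    · exact hk (le_trans (le_inf le_rfl h) this)
    · exact hm (le_trans (le_inf h le_rfl) this)
end

section
/- Let M=(S,P,I,AP,L) be a finite generalized possibilistic Kripke structure and B : S → [0,1] a fuzzy state. Then for every state s ∈ S, the persistence possibility satisfies Po(s ⊨ ◇□B) = ( P* ∘ r_{D_B∘P} )(s) = sup_{t∈S} ( P*(s,t) ∧ r_{D_B∘P}(t) ), where r_{D_B∘P}(t) = sup{ inf_{i≥0} ( B(s_i) ∧ P(s_i,s_{i+1}) ) : s₀ = t, s_i ∈ S for all i ≥ 1 }. -/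
open unitInterval

section Aux
variable {S : Type*}

lemma matComp_assoc (A B C : S → S → unitInterval) :
    matComp (matComp A B) C = matComp A (matComp B C) := by
  funext s t
  simp only [matComp, iSup_inf_eq, inf_iSup_eq, inf_assoc]
  exact iSup_comm

lemma matComp_id_left (A : S → S → unitInterval) : matComp matId A = A := by
  funext s t
  apply le_antisymm
  · apply iSup_le; intro u
    unfold matId
    split
    · next h => subst h; exact inf_le_right
    · exact inf_le_left.trans nonneg'
  · calc A s t = matId s s ⊓ A s t := by simp [matId, inf_eq_right.mpr le_one']
      _ ≤ ⨆ u, matId s u ⊓ A u t := le_iSup (fun u => matId s u ⊓ A u t) s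

lemma matComp_id_right (A : S → S → unitInterval) : matComp A matId = A := by
  funext s t
  apply le_antisymm
  · apply iSup_le; intro u
    unfold matId
    split
    · next h => subst h; exact inf_le_left
    · exact inf_le_right.trans nonneg'
  · calc A s t = A s t ⊓ matId t t := by simp [matId, inf_eq_left.mpr le_one']
      _ ≤ ⨆ u, A s u ⊓ matId u t := le_iSup (fun u => A s u ⊓ matId u t) t

lemma matPow_succ' (A : S → S → unitInterval) (n : ℕ) :
    matPow A (n + 1) = matComp A (matPow A n) := by
  induction n with
  | zero => show matComp matId A = matComp A matId
            rw [matComp_id_left, matComp_id_right]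
  | succ n ih =>
      show matComp (matPow A (n+1)) A = matComp A (matComp (matPow A n) A)
      rw [ih, matComp_assoc]

lemma le_matPow_path (P : S → S → unitInterval) (π : ℕ → S) (n : ℕ) :
    (⨅ k, P (π k) (π (k + 1))) ≤ matPow P n (π 0) (π n) := by
  induction n with
  | zero => simp [matPow, matId, le_one']
  | succ n ih =>
      have : (⨅ k, P (π k) (π (k + 1))) ≤ matPow P n (π 0) (π n) ⊓ P (π n) (π (n + 1)) :=
        le_inf ih (iInf_le _ n)
      exact this.trans (le_iSup (fun u => matPow P n (π 0) u ⊓ P u (π (n+1))) (π n))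

open Classical in
lemma matComp_diag (B : S → unitInterval) (P : S → S → unitInterval) (u v : S) :
    matComp (diagMat B) P u v = B u ⊓ P u v := by
  apply le_antisymm
  · apply iSup_le; intro w
    unfold diagMat
    split
    · next h => subst h; exact le_rfl
    · exact inf_le_left.trans nonneg'
  · calc B u ⊓ P u v = diagMat B u u ⊓ P u v := by simp [diagMat]
      _ ≤ _ := le_iSup (fun w => diagMat B u w ⊓ P w v) u

lemma rP_le_Po (P : S → S → unitInterval) (B : S → unitInterval) (t : S) :
    rP (matComp (diagMat B) P) t ≤
      Po P (fun π => ⨆ i : ℕ, ⨅ j : ℕ, ⨅ _ : i ≤ j, B (π j)) t := by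
  apply iSup_le; intro ρ; apply iSup_le; intro hρ
  refine le_trans ?_ (le_iSup_of_le ρ (le_iSup_of_le hρ le_rfl))
  refine le_inf ?_ ?_
  · exact iInf_mono fun i => le_of_eq_of_le (matComp_diag B P _ _) inf_le_right
  · refine le_trans ?_ (le_iSup _ 0)
    refine le_iInf fun j => le_iInf fun _ =>
      (iInf_le _ j).trans (le_of_eq_of_le (matComp_diag B P _ _) inf_le_left)

lemma step_le_Po (P : S → S → unitInterval) (B : S → unitInterval) (s u : S) :
    P s u ⊓ Po P (fun π => ⨆ i : ℕ, ⨅ j : ℕ, ⨅ _ : i ≤ j, B (π j)) u ≤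
      Po P (fun π => ⨆ i : ℕ, ⨅ j : ℕ, ⨅ _ : i ≤ j, B (π j)) s := by
  unfold Po
  rw [inf_iSup_eq]
  apply iSup_le; intro ρ
  rw [inf_iSup_eq]
  apply iSup_le; intro hρ
  set π : ℕ → S := fun n => Nat.casesOn n s ρ with hπ
  refine le_trans ?_ (le_iSup_of_le π (le_iSup_of_le rfl le_rfl))
  refine le_inf ?_ ?_
  · refine le_iInf fun i => ?_
    cases i with
    | zero =>
        have h1 : P (π 0) (π (0 + 1)) = P s u := by show P s (ρ 0) = P s u; rw [hρ]
        rw [h1]; exact inf_le_left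
    | succ k => exact inf_le_right.trans (inf_le_left.trans (iInf_le _ k))
  · refine le_trans (inf_le_right.trans inf_le_right) ?_
    apply iSup_le; intro i
    refine le_trans ?_ (le_iSup _ (i + 1))
    refine le_iInf fun j => le_iInf fun hj => ?_
    cases j with
    | zero => omega
    | succ k => exact iInf₂_le k (Nat.succ_le_succ_iff.mp hj)

lemma pow_inf_r_le_Po (P : S → S → unitInterval) (B : S → unitInterval) (n : ℕ) :
    ∀ s t : S, matPow P n s t ⊓ rP (matComp (diagMat B) P) t ≤
      Po P (fun π => ⨆ i : ℕ, ⨅ j : ℕ, ⨅ _ : i ≤ j, B (π j)) s := by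
  induction n with
  | zero =>
      intro s t
      by_cases h : s = t
      · subst h; exact inf_le_right.trans (rP_le_Po P B s)
      · exact inf_le_left.trans (le_trans (le_of_eq (by simp [matPow, matId, h])) nonneg')
  | succ n ih =>
      intro s t
      rw [matPow_succ']
      show (⨆ u, P s u ⊓ matPow P n u t) ⊓ _ ≤ _
      rw [iSup_inf_eq]
      apply iSup_le; intro u
      rw [inf_assoc]
      exact (inf_le_inf_left _ (ih u t)).trans (step_le_Po P B s u)

theorem Po_persistence_eq' (P : S → S → unitInterval) (B : S → unitInterval) (s : S) :
    Po P (fun π => ⨆ i : ℕ, ⨅ j : ℕ, ⨅ _ : i ≤ j, B (π j)) s =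
      ⨆ t : S, reflTransClos P s t ⊓ rP (matComp (diagMat B) P) t := by
  apply le_antisymm
  · apply iSup_le; intro π; apply iSup_le; intro hπ
    subst hπ
    rw [inf_iSup_eq]
    apply iSup_le; intro i
    refine le_trans ?_ (le_iSup _ (π i))
    refine le_inf ?_ ?_
    · exact inf_le_left.trans ((le_matPow_path P π i).trans
        (le_iSup (fun k => matPow P k (π 0) (π i)) i))
    · refine le_trans ?_ (le_iSup_of_le (fun m => π (i + m)) (le_iSup_of_le rfl le_rfl))
      refine le_iInf fun m => ?_
      rw [matComp_diag]
      refine le_inf ?_ ?_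
      · exact inf_le_right.trans (iInf₂_le (i + m) (Nat.le_add_right i m))
      · exact inf_le_left.trans (iInf_le _ (i + m))
  · apply iSup_le; intro t
    show (⨆ k, matPow P k s t) ⊓ _ ≤ _
    rw [iSup_inf_eq]
    exact iSup_le fun k => pow_inf_r_le_Po P B k s t

end Aux

/-- For a finite GPKS and a fuzzy state `B`, the persistence
possibility satisfies
`Po(s ⊨ ◇□B) = ( P* ∘ r_{D_B∘P} )(s) = sup_{t∈S} ( P*(s,t) ∧ r_{D_B∘P}(t) )`,
where `(D_B∘P)(u,v) = B(u) ∧ P(u,v)`. -/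
theorem Po_persistence_eq {S : Type*} [Fintype S] [Nonempty S]
    {AP : Type*} [Fintype AP]
    (P : S → S → unitInterval) (Init : S → unitInterval) (L : S → AP → unitInterval)
    (B : S → unitInterval) (s : S) :
    Po P (fun π => ⨆ i : ℕ, ⨅ j : ℕ, ⨅ _ : i ≤ j, B (π j)) s =
      ⨆ t : S, reflTransClos P s t ⊓ rP (matComp (diagMat B) P) t := by
  exact Po_persistence_eq' P B s
end
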